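/- Let Γ be a group of orientation-preserving homeomorphisms of ℝ satisfying f(x+1) = f(x)+1 for all x, acting diagonally, properly discontinuously and cocompactly on the triple space T̃ = {(u,s,p) ∈ ℝ³ : u < s < p < u+1} (there is a compact K ⊆ T̃ with ⋃_{γ∈Γ} γ·K = T̃). Then Γ contains no parabolic elements: every γ ∈ Γ with γ ≠ id that has a fixed point in ℝ has fixed points x₀ and y with x₀ < y < x₀ + 1, and the fixed-point set of γ projects to exactly two points of ℝ/ℤ. -/

import Mathlib

/-- The open triple space `T̃ = {(u,s,p) ∈ ℝ³ : u < s < p < u + 1}`. -/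
def TripleSpace : Set (ℝ × ℝ × ℝ) :=
  {q | q.1 < q.2.1 ∧ q.2.1 < q.2.2 ∧ q.2.2 < q.1 + 1}

/-- The diagonal action of a homeomorphism of `ℝ` on triples. -/
def tripleAct (γ : Equiv.Perm ℝ) (q : ℝ × ℝ × ℝ) : ℝ × ℝ × ℝ :=
  (γ q.1, γ q.2.1, γ q.2.2)

open Filter Topology Set

theorem Equiv.Perm.inv_apply_self {α : Type*} (f : Equiv.Perm α) (x : α) : f⁻¹ (f x) = x :=
  Equiv.symm_apply_apply f x

theorem Equiv.Perm.apply_inv_self {α : Type*} (f : Equiv.Perm α) (x : α) : f (f⁻¹ x) = x :=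
  Equiv.apply_symm_apply f x

namespace NoParab

lemma tripleAct_inv {σ : Equiv.Perm ℝ} {q k : ℝ × ℝ × ℝ} (h : tripleAct σ k = q) :
    tripleAct σ⁻¹ q = k := by
  subst h
  simp [tripleAct]

lemma pow_apply (γ : Equiv.Perm ℝ) : ∀ (k : ℕ) (x : ℝ), (γ ^ k) x = (⇑γ)^[k] x
  | 0, x => rfl
  | (k+1), x => by
      rw [pow_succ, Function.iterate_succ_apply]
      exact pow_apply γ k (γ x)

lemma iterate_gt {f : ℝ → ℝ} (hf : StrictMono f) {x : ℝ} (hx : x < f x) :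
    ∀ k : ℕ, x < f^[k + 1] x := by
  intro k
  induction k with
  | zero => simpa using hx
  | succ k ih =>
      rw [Function.iterate_succ_apply']
      exact lt_trans hx (hf ih)

lemma iterate_lt {f : ℝ → ℝ} (hf : StrictMono f) {x : ℝ} (hx : f x < x) :
    ∀ k : ℕ, f^[k + 1] x < x := by
  intro k
  induction k with
  | zero => simpa using hx
  | succ k ih =>
      rw [Function.iterate_succ_apply']
      exact lt_trans (hf ih) hx

lemma per_int {γ : Equiv.Perm ℝ} (hp : ∀ x : ℝ, γ (x + 1) = γ x + 1) :
    ∀ (x : ℝ) (k : ℤ), γ (x + k) = γ x + k := by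
  have hm : ∀ x : ℝ, γ (x - 1) = γ x - 1 := by
    intro x
    have h := hp (x - 1)
    rw [sub_add_cancel] at h
    linarith
  intro x k
  induction k using Int.induction_on with
  | zero => simp
  | succ n ih =>
      have h1 : x + (((n : ℤ) + 1 : ℤ) : ℝ) = (x + ((n : ℤ) : ℝ)) + 1 := by push_cast; ring
      rw [h1, hp, ih]; push_cast; ring
  | pred n ih =>
      have h1 : x + ((-(n : ℤ) - 1 : ℤ) : ℝ) = (x + ((-(n : ℤ) : ℤ) : ℝ)) - 1 := by push_cast; ring
      rw [h1, hm, ih]; push_cast; ring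

lemma box_spec {S : ℝ × ℝ × ℝ} (hS : S ∈ TripleSpace) :
    ∃ B : Set (ℝ × ℝ × ℝ), IsCompact B ∧ B ⊆ TripleSpace ∧ B ∈ 𝓝 S := by
  obtain ⟨h1, h2, h3⟩ := hS
  set m := min (S.2.1 - S.1) (min (S.2.2 - S.2.1) (S.1 + 1 - S.2.2)) with hmdef
  have hm1 : m ≤ S.2.1 - S.1 := min_le_left _ _
  have hm2 : m ≤ S.2.2 - S.2.1 := le_trans (min_le_right _ _) (min_le_left _ _)
  have hm3 : m ≤ S.1 + 1 - S.2.2 := le_trans (min_le_right _ _) (min_le_right _ _)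
  have hm0 : 0 < m := lt_min (by linarith) (lt_min (by linarith) (by linarith))
  set r := m / 4 with hrdef
  have hr0 : 0 < r := by positivity
  refine ⟨Icc (S.1 - r) (S.1 + r) ×ˢ (Icc (S.2.1 - r) (S.2.1 + r) ×ˢ Icc (S.2.2 - r) (S.2.2 + r)),
    isCompact_Icc.prod (isCompact_Icc.prod isCompact_Icc), ?_, ?_⟩
  · rintro ⟨x, y, z⟩ h
    simp only [Set.mem_prod, Set.mem_Icc] at h
    obtain ⟨⟨hx1, hx2⟩, ⟨hy1, hy2⟩, hz1, hz2⟩ := h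
    refine ⟨by simp only; linarith, by simp only; linarith, by simp only; linarith⟩
  · exact prod_mem_nhds (Icc_mem_nhds (by linarith) (by linarith))
      (prod_mem_nhds (Icc_mem_nhds (by linarith) (by linarith))
        (Icc_mem_nhds (by linarith) (by linarith)))

lemma ufiber {α : Type*} (𝒰 : Ultrafilter ℕ) (f : ℕ → α) {Fs : Set α} (hF : Fs.Finite)
    {S : Set ℕ} (hS : S ∈ 𝒰) (hf : ∀ n ∈ S, f n ∈ Fs) :
    ∃ w, {n | f n = w} ∈ 𝒰 := by
  by_contra h
  push_neg at h
  have hT : (⋂ w ∈ Fs, {n | f n = w}ᶜ) ∈ 𝒰 := by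
    rw [← Ultrafilter.mem_coe, Filter.biInter_mem hF]
    intro w _
    exact Ultrafilter.compl_mem_iff_notMem.mpr (h w)
  obtain ⟨n, hn1, hn2⟩ := Filter.nonempty_of_mem (Filter.inter_mem hS hT)
  simp only [Set.mem_iInter, Set.mem_compl_iff, Set.mem_setOf_eq] at hn2
  exact hn2 (f n) (hf n hn1) rfl

lemma template (Γ : Subgroup (Equiv.Perm ℝ))
    (hproper : ∀ K : Set (ℝ × ℝ × ℝ), K ⊆ TripleSpace → IsCompact K →
      {γ : Equiv.Perm ℝ | γ ∈ Γ ∧ (tripleAct γ '' K ∩ K).Nonempty}.Finite)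
    (𝒰 : Ultrafilter ℕ) (δ : ℕ → Equiv.Perm ℝ) (hδ : ∀ n, δ n ∈ Γ)
    (hinj : ∀ w : Equiv.Perm ℝ, {n | δ n = w} ∉ 𝒰)
    (T : ℕ → ℝ × ℝ × ℝ) {S P : ℝ × ℝ × ℝ}
    (hS : S ∈ TripleSpace) (hP : P ∈ TripleSpace)
    (hT : Tendsto T ↑𝒰 (𝓝 S))
    (hI : Tendsto (fun n => tripleAct (δ n) (T n)) ↑𝒰 (𝓝 P)) : False := by
  obtain ⟨BS, hBSc, hBSsub, hBSn⟩ := box_spec hS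
  obtain ⟨BP, hBPc, hBPsub, hBPn⟩ := box_spec hP
  have hFin := hproper (BS ∪ BP) (union_subset hBSsub hBPsub) (hBSc.union hBPc)
  have e1 : {n | T n ∈ BS} ∈ 𝒰 := Filter.mem_map.mp (hT hBSn)
  have e2 : {n | tripleAct (δ n) (T n) ∈ BP} ∈ 𝒰 := Filter.mem_map.mp (hI hBPn)
  have hE : ({n | T n ∈ BS} ∩ {n | tripleAct (δ n) (T n) ∈ BP}) ∈ 𝒰 :=
    Filter.inter_mem e1 e2
  obtain ⟨w, hw⟩ := ufiber 𝒰 δ hFin hE (fun n hn =>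
    ⟨hδ n, ⟨tripleAct (δ n) (T n),
      Set.mem_inter (Set.mem_image_of_mem _ (Or.inl hn.1)) (Or.inr hn.2)⟩⟩)
  exact hinj w hw

lemma fix_three (Γ : Subgroup (Equiv.Perm ℝ))
    (hmono : ∀ γ ∈ Γ, StrictMono ⇑γ)
    (hproper : ∀ K : Set (ℝ × ℝ × ℝ), K ⊆ TripleSpace → IsCompact K →
      {γ : Equiv.Perm ℝ | γ ∈ Γ ∧ (tripleAct γ '' K ∩ K).Nonempty}.Finite)
    {γ : Equiv.Perm ℝ} (hγ : γ ∈ Γ) {u s p : ℝ}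
    (h1 : u < s) (h2 : s < p) (h3 : p < u + 1)
    (f1 : γ u = u) (f2 : γ s = s) (f3 : γ p = p) : γ = 1 := by
  have hfix : ∀ (k : ℕ) (x : ℝ), γ x = x → (γ ^ k) x = x := by
    intro k
    induction k with
    | zero => intro x _; rfl
    | succ k ih =>
        intro x hx
        rw [pow_succ]
        show (γ ^ k) (γ x) = x
        rw [hx]
        exact ih x hx
  have hK := hproper {(u, s, p)} (by
      rw [Set.singleton_subset_iff]
      exact ⟨h1, h2, h3⟩) isCompact_singleton
  have hmaps : Set.MapsTo (fun k : ℕ => γ ^ k) Set.univ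
      {δ : Equiv.Perm ℝ | δ ∈ Γ ∧ (tripleAct δ '' {(u, s, p)} ∩ {(u, s, p)}).Nonempty} := by
    intro k _
    have him : tripleAct (γ ^ k) (u, s, p) = (u, s, p) := by
      simp [tripleAct, hfix k u f1, hfix k s f2, hfix k p f3]
    exact ⟨pow_mem hγ k, ⟨(u, s, p), ⟨⟨(u, s, p), rfl, him⟩, rfl⟩⟩⟩
  obtain ⟨k, -, l, -, hkl, hpow⟩ := Set.infinite_univ.exists_ne_map_eq_of_mapsTo hmaps hK
  have key : ∀ k l : ℕ, k < l → (γ : Equiv.Perm ℝ) ^ k = γ ^ l → γ = 1 := by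
    intro k l hkl he
    have hm : γ ^ (l - k) = 1 := by
      have h1' : γ ^ k * γ ^ (l - k) = γ ^ k * 1 := by
        rw [mul_one, ← pow_add, Nat.add_sub_cancel' hkl.le, he]
      exact mul_left_cancel h1'
    have hall : ∀ x : ℝ, γ x = x := by
      intro x
      obtain ⟨m, hmeq⟩ : ∃ m, l - k = m + 1 := ⟨l - k - 1, by omega⟩
      have hiter : (⇑γ)^[m + 1] x = x := by
        rw [← pow_apply, ← hmeq, hm]
        rfl
      rcases lt_trichotomy (γ x) x with h | h | h
      · exact absurd hiter (ne_of_lt (iterate_lt (hmono γ hγ) h m))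
      · exact h
      · exact absurd hiter (ne_of_gt (iterate_gt (hmono γ hγ) h m))
    ext x
    simp only [Equiv.Perm.coe_one, id_eq]
    exact hall x
  rcases lt_or_gt_of_ne hkl with h | h
  · exact key k l h hpow
  · exact key l k h hpow.symm


set_option maxHeartbeats 4000000 in
lemma no_parabolic (Γ : Subgroup (Equiv.Perm ℝ))
    (hmono : ∀ γ ∈ Γ, StrictMono ⇑γ) (hcont : ∀ γ ∈ Γ, Continuous ⇑γ)
    (hper : ∀ γ ∈ Γ, ∀ x : ℝ, γ (x + 1) = γ x + 1)
    (hproper : ∀ K : Set (ℝ × ℝ × ℝ), K ⊆ TripleSpace → IsCompact K →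
      {γ : Equiv.Perm ℝ | γ ∈ Γ ∧ (tripleAct γ '' K ∩ K).Nonempty}.Finite)
    (hcocompact : ∃ K : Set (ℝ × ℝ × ℝ), K ⊆ TripleSpace ∧ IsCompact K ∧
      (⋃ γ ∈ Γ, tripleAct γ '' K) = TripleSpace)
    {γ : Equiv.Perm ℝ} (hγ : γ ∈ Γ) {x₀ : ℝ} (hfix : γ x₀ = x₀)
    (hpos : ∀ y : ℝ, x₀ < y → y < x₀ + 1 → y < γ y) : False := by
  classical
  -- basic facts about γ
  have hγm : StrictMono ⇑γ := hmono γ hγ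
  have hγi : γ⁻¹ ∈ Γ := inv_mem hγ
  have hγim : StrictMono ⇑(γ⁻¹) := hmono _ hγi
  have hfix1 : γ (x₀ + 1) = x₀ + 1 := by rw [hper γ hγ, hfix]
  have hinvfix : γ⁻¹ x₀ = x₀ := by
    conv_lhs => rw [← hfix]
    exact Equiv.Perm.inv_apply_self γ x₀
  have hinvfix1 : γ⁻¹ (x₀ + 1) = x₀ + 1 := by
    conv_lhs => rw [← hfix1]
    exact Equiv.Perm.inv_apply_self γ (x₀ + 1)
  have hγmem : ∀ w : ℝ, x₀ < w → w < x₀ + 1 → (x₀ < γ w ∧ γ w < x₀ + 1) := by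
    intro w h1 h2
    exact ⟨lt_trans h1 (hpos w h1 h2), by rw [← hfix1]; exact hγm h2⟩
  have hinvmem : ∀ w : ℝ, x₀ < w → w < x₀ + 1 →
      (x₀ < γ⁻¹ w ∧ γ⁻¹ w < x₀ + 1 ∧ γ⁻¹ w < w) := by
    intro w h1 h2
    have e1 : x₀ < γ⁻¹ w := by rw [← hinvfix]; exact hγim h1
    have e2 : γ⁻¹ w < x₀ + 1 := by rw [← hinvfix1]; exact hγim h2
    have e3 : γ⁻¹ w < w := by
      have := hpos (γ⁻¹ w) e1 e2
      rwa [Equiv.Perm.apply_inv_self] at this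
    exact ⟨e1, e2, e3⟩
  -- fixed points of γ are exactly x₀ + ℤ
  have hfixZ : ∀ z : ℝ, γ z = z → ∃ k : ℤ, z = x₀ + k := by
    intro z hz
    refine ⟨⌊z - x₀⌋, ?_⟩
    have hz' : γ (z + ((-⌊z - x₀⌋ : ℤ) : ℝ)) = z + ((-⌊z - x₀⌋ : ℤ) : ℝ) := by
      rw [per_int (hper γ hγ), hz]
    set z' := z + ((-⌊z - x₀⌋ : ℤ) : ℝ) with hz'def
    have hc : z' = z - (⌊z - x₀⌋ : ℝ) := by rw [hz'def]; push_cast; ring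
    have hb1 : x₀ ≤ z' := by
      rw [hc]
      have := Int.floor_le (z - x₀)
      linarith
    have hb2 : z' < x₀ + 1 := by
      rw [hc]
      have := Int.lt_floor_add_one (z - x₀)
      linarith
    have : z' = x₀ := by
      rcases eq_or_lt_of_le hb1 with h | h
      · exact h.symm
      · exact absurd hz' (ne_of_gt (hpos z' h hb2))
    have : z - (⌊z - x₀⌋ : ℝ) = x₀ := by rw [← hc]; exact this
    linarith
  -- the left and right orbit sequences
  set b : ℝ := x₀ - 1/4 with hbdef
  set a : ℝ := x₀ + 1/4 with hadef
  have hposL : ∀ w : ℝ, x₀ - 1 < w → w < x₀ → w < γ w := by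
    intro w h1 h2
    have := hpos (w + 1) (by linarith) (by linarith)
    have hpw : γ (w + 1) = γ w + 1 := hper γ hγ w
    linarith
  set bseq : ℕ → ℝ := fun n => (⇑γ)^[n] b with hbseqdef
  have hbseq_succ : ∀ n, bseq (n + 1) = γ (bseq n) := by
    intro n; exact Function.iterate_succ_apply' _ _ _
  have hbmem : ∀ n, bseq n ∈ Ioo (x₀ - 1) x₀ := by
    intro n
    induction n with
    | zero =>
        constructor
        · show x₀ - 1 < b; rw [hbdef]; linarith
        · show b < x₀; rw [hbdef]; linarith
    | succ n ih =>
        rw [hbseq_succ]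
        obtain ⟨ih1, ih2⟩ := ih
        constructor
        · exact lt_trans ih1 (hposL _ ih1 ih2)
        · rw [← hfix]; exact hγm ih2
  have hbmono : Monotone bseq := by
    apply monotone_nat_of_le_succ
    intro n
    rw [hbseq_succ]
    exact (hposL _ (hbmem n).1 (hbmem n).2).le
  have hbbdd : BddAbove (range bseq) := ⟨x₀, by rintro _ ⟨n, rfl⟩; exact (hbmem n).2.le⟩
  have hbtend : Tendsto bseq atTop (𝓝 x₀) := by
    have ht := tendsto_atTop_ciSup hbmono hbbdd
    set L := ⨆ n, bseq n with hLdef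
    have h2 : Tendsto (fun n => bseq (n + 1)) atTop (𝓝 L) := ht.comp (tendsto_add_atTop_nat 1)
    have h3 : Tendsto (fun n => γ (bseq n)) atTop (𝓝 (γ L)) := ((hcont γ hγ).tendsto L).comp ht
    have heq : (fun n => bseq (n + 1)) = fun n => γ (bseq n) := funext fun n => hbseq_succ n
    rw [heq] at h2
    have hγL : γ L = L := tendsto_nhds_unique h3 h2
    have hLle : L ≤ x₀ := ciSup_le fun n => (hbmem n).2.le
    have hLgt : x₀ - 1 < L := lt_of_lt_of_le (hbmem 0).1 (le_ciSup hbbdd 0)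
    have hLeq : L = x₀ := by
      by_contra hne
      have hlt : L < x₀ := lt_of_le_of_ne hLle hne
      exact absurd hγL (ne_of_gt (hposL L hLgt hlt))
    rwa [hLeq] at ht
  set aseq : ℕ → ℝ := fun n => (⇑(γ⁻¹))^[n] a with haseqdef
  have haseq_succ : ∀ n, aseq (n + 1) = γ⁻¹ (aseq n) := by
    intro n; exact Function.iterate_succ_apply' _ _ _
  have hamem : ∀ n, aseq n ∈ Ioo x₀ (x₀ + 1) := by
    intro n
    induction n with
    | zero =>
        constructor
        · show x₀ < a; rw [hadef]; linarith
        · show a < x₀ + 1; rw [hadef]; linarith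
    | succ n ih =>
        rw [haseq_succ]
        obtain ⟨ih1, ih2⟩ := ih
        obtain ⟨e1, e2, _⟩ := hinvmem _ ih1 ih2
        exact ⟨e1, e2⟩
  have haanti : Antitone aseq := by
    apply antitone_nat_of_succ_le
    intro n
    rw [haseq_succ]
    exact (hinvmem _ (hamem n).1 (hamem n).2).2.2.le
  have habdd : BddBelow (range aseq) := ⟨x₀, by rintro _ ⟨n, rfl⟩; exact (hamem n).1.le⟩
  have hatend : Tendsto aseq atTop (𝓝 x₀) := by
    have ht := tendsto_atTop_ciInf haanti habdd
    set L := ⨅ n, aseq n with hLdef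
    have h2 : Tendsto (fun n => aseq (n + 1)) atTop (𝓝 L) := ht.comp (tendsto_add_atTop_nat 1)
    have h3 : Tendsto (fun n => γ⁻¹ (aseq n)) atTop (𝓝 (γ⁻¹ L)) :=
      ((hcont _ hγi).tendsto L).comp ht
    have heq : (fun n => aseq (n + 1)) = fun n => γ⁻¹ (aseq n) := funext fun n => haseq_succ n
    rw [heq] at h2
    have hγL : γ⁻¹ L = L := tendsto_nhds_unique h3 h2
    have hγL' : γ L = L := by
      conv_lhs => rw [← hγL]
      exact Equiv.Perm.apply_inv_self γ L
    have hLge : x₀ ≤ L := le_ciInf fun n => (hamem n).1.le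
    have hLlt : L < x₀ + 1 := lt_of_le_of_lt (ciInf_le habdd 0) (hamem 0).2
    have hLeq : L = x₀ := by
      by_contra hne
      have hlt : x₀ < L := lt_of_le_of_ne hLge (Ne.symm hne)
      exact absurd hγL' (ne_of_gt (hpos L hlt hLlt))
    rwa [hLeq] at ht
  -- the triple sequence
  set qseq : ℕ → ℝ × ℝ × ℝ := fun n => (bseq n, x₀, aseq n) with hqdef
  have hble : ∀ n, b ≤ bseq n := fun n => hbmono (Nat.zero_le n)
  have hale : ∀ n, aseq n ≤ a := fun n => haanti (Nat.zero_le n)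
  have hqT : ∀ n, qseq n ∈ TripleSpace := by
    intro n
    refine ⟨(hbmem n).2, (hamem n).1, ?_⟩
    show aseq n < bseq n + 1
    have h1 := hble n
    have h2 := hale n
    rw [hbdef] at h1
    rw [hadef] at h2
    linarith
  have hqtend : Tendsto qseq atTop (𝓝 (x₀, x₀, x₀)) :=
    hbtend.prodMk_nhds (tendsto_const_nhds.prodMk_nhds hatend)
  -- covering elements
  obtain ⟨K, hKsub, hKcpt, hKcover⟩ := hcocompact
  have hgex : ∀ n, ∃ g : Equiv.Perm ℝ, g ∈ Γ ∧ tripleAct g (qseq n) ∈ K := by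
    intro n
    have hmem : qseq n ∈ ⋃ δ ∈ Γ, tripleAct δ '' K := by rw [hKcover]; exact hqT n
    simp only [Set.mem_iUnion] at hmem
    obtain ⟨δ, hδ, k, hk, hke⟩ := hmem
    exact ⟨δ⁻¹, inv_mem hδ, by rw [tripleAct_inv hke]; exact hk⟩
  choose g hgΓ hgK using hgex
  -- ultrafilter
  obtain ⟨𝒰, h𝒰⟩ := Filter.exists_ultrafilter_le (atTop : Filter ℕ)
  have hUev : ∀ {pr : ℕ → Prop}, (∀ᶠ n in atTop, pr n) → ∀ᶠ n in ↑𝒰, pr n :=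
    fun h => h.filter_mono h𝒰
  -- limit of the images in K
  have hKmem : ↑(𝒰.map (fun n => tripleAct (g n) (qseq n))) ≤ 𝓟 K := by
    rw [Ultrafilter.coe_map, Filter.le_principal_iff]
    exact Filter.mem_map.mpr (Filter.Eventually.of_forall hgK)
  obtain ⟨κ, hκK, hκle⟩ := hKcpt.ultrafilter_le_nhds (𝒰.map fun n => tripleAct (g n) (qseq n)) hKmem
  have hκT : Tendsto (fun n => tripleAct (g n) (qseq n)) ↑𝒰 (𝓝 κ) := by
    rw [Filter.Tendsto, ← Ultrafilter.coe_map]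
    exact hκle
  obtain ⟨hup1, hup2, hup3⟩ := hKsub hκK
  set u : ℝ := κ.1 with hudef
  set s : ℝ := κ.2.1 with hsdef
  set p : ℝ := κ.2.2 with hpdef
  have hA : Tendsto (fun n => g n (bseq n)) ↑𝒰 (𝓝 u) := (continuous_fst.tendsto κ).comp hκT
  have hB : Tendsto (fun n => g n x₀) ↑𝒰 (𝓝 s) :=
    ((continuous_fst.comp continuous_snd).tendsto κ).comp hκT
  have hC : Tendsto (fun n => g n (aseq n)) ↑𝒰 (𝓝 p) :=
    ((continuous_snd.comp continuous_snd).tendsto κ).comp hκT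
  -- bound for g n x₀
  have hRex : ∃ R : ℝ, ∀ n, |g n x₀| ≤ R := by
    have hKc2 : IsCompact ((fun q : ℝ × ℝ × ℝ => q.2.1) '' K) :=
      hKcpt.image (continuous_fst.comp continuous_snd)
    obtain ⟨R, hR⟩ := (Metric.isBounded_iff_subset_closedBall 0).mp hKc2.isBounded
    refine ⟨R, fun n => ?_⟩
    have hmem : g n x₀ ∈ (fun q : ℝ × ℝ × ℝ => q.2.1) '' K := ⟨_, hgK n, rfl⟩
    have := hR hmem
    rw [Metric.mem_closedBall, Real.dist_eq, sub_zero] at this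
    exact this
  obtain ⟨R, hR⟩ := hRex
  -- ultrafilter limits of bounded sequences
  have hulim : ∀ (f : ℕ → ℝ) (c d : ℝ), (∀ n, f n ∈ Icc c d) →
      ∃ L, Tendsto f ↑𝒰 (𝓝 L) := by
    intro f c d hf
    have hle : ↑(𝒰.map f) ≤ 𝓟 (Icc c d) := by
      rw [Ultrafilter.coe_map, Filter.le_principal_iff]
      exact Filter.mem_map.mpr (Filter.Eventually.of_forall hf)
    obtain ⟨L, _, hle2⟩ := isCompact_Icc.ultrafilter_le_nhds (𝒰.map f) hle
    refine ⟨L, ?_⟩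
    rw [Filter.Tendsto, ← Ultrafilter.coe_map]
    exact hle2
  -- pointwise ultrafilter limit of the g n
  have hkex : ∀ x : ℝ, ∃ L, Tendsto (fun n => g n x) ↑𝒰 (𝓝 L) := by
    intro x
    set m : ℕ := ⌈|x - x₀|⌉₊ with hmdef
    have hm : |x - x₀| ≤ (m : ℝ) := Nat.le_ceil _
    have habs := abs_le.mp hm
    apply hulim (fun n => g n x) (-(R + m)) (R + m)
    intro n
    have hper' : ∀ k : ℤ, g n (x₀ + k) = g n x₀ + k := per_int (hper _ (hgΓ n)) x₀
    have h1 : g n x ≤ g n x₀ + m := by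
      have hxle : x ≤ x₀ + ((m : ℤ) : ℝ) := by push_cast; linarith [habs.2]
      have := (hmono _ (hgΓ n)).monotone hxle
      rw [hper' m] at this
      push_cast at this ⊢
      linarith
    have h2 : g n x₀ - m ≤ g n x := by
      have hxge : x₀ + ((-m : ℤ) : ℝ) ≤ x := by push_cast; linarith [habs.1]
      have := (hmono _ (hgΓ n)).monotone hxge
      rw [hper' (-m)] at this
      push_cast at this ⊢
      linarith
    have hb := abs_le.mp (hR n)
    rw [Set.mem_Icc]
    constructor
    · linarith
    · linarith
  choose klim hk using hkex
  have hkmono : ∀ x y : ℝ, x ≤ y → klim x ≤ klim y := fun x y hxy =>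
    le_of_tendsto_of_tendsto' (hk x) (hk y) (fun n => (hmono _ (hgΓ n)).monotone hxy)
  -- transferred eventual facts
  have haev : ∀ {x : ℝ}, x₀ < x → ∀ᶠ n in ↑𝒰, aseq n < x :=
    fun hx => hUev (hatend.eventually_lt_const hx)
  have hbev : ∀ {x : ℝ}, x < x₀ → ∀ᶠ n in ↑𝒰, x < bseq n :=
    fun hx => hUev (hbtend.eventually_const_lt hx)
  -- bounds for klim on the interval
  have hkb : ∀ x : ℝ, x₀ < x → x < x₀ + 1 → p ≤ klim x ∧ klim x ≤ u + 1 := by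
    intro x hx1 hx2
    constructor
    · refine le_of_tendsto_of_tendsto hC (hk x) ?_
      filter_upwards [haev hx1] with n hn
      exact ((hmono _ (hgΓ n)).monotone hn.le : g n (aseq n) ≤ g n x)
    · have hA1 : Tendsto (fun n => g n (bseq n) + 1) ↑𝒰 (𝓝 (u + 1)) := hA.add_const 1
      refine le_of_tendsto_of_tendsto (hk x) hA1 ?_
      filter_upwards [hbev (show x - 1 < x₀ by linarith)] with n hn
      have hxle : x ≤ bseq n + 1 := by linarith
      have := (hmono _ (hgΓ n)).monotone hxle
      rwa [hper _ (hgΓ n) (bseq n)] at this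
  -- dichotomy on g
  by_cases hD : ∃ gc : Equiv.Perm ℝ, {n | g n = gc} ∈ 𝒰
  · obtain ⟨gc, hgc⟩ := hD
    have hgcev : ∀ᶠ n in ↑𝒰, g n = gc := Ultrafilter.mem_coe.mpr hgc
    obtain ⟨n₀, hn₀⟩ := Filter.nonempty_of_mem (Ultrafilter.mem_coe.mpr hgc)
    have hgcΓ : gc ∈ Γ := by rw [← hn₀]; exact hgΓ n₀
    have hcT : Continuous (tripleAct gc) := by
      unfold tripleAct
      exact ((hcont gc hgcΓ).comp continuous_fst).prodMk
        (((hcont gc hgcΓ).comp (continuous_fst.comp continuous_snd)).prodMk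
          ((hcont gc hgcΓ).comp (continuous_snd.comp continuous_snd)))
    have htt : Tendsto (fun n => tripleAct gc (qseq n)) ↑𝒰 (𝓝 (tripleAct gc (x₀, x₀, x₀))) :=
      (hcT.tendsto _).comp (hqtend.mono_left h𝒰)
    have hinK : ∀ᶠ n in ↑𝒰, tripleAct gc (qseq n) ∈ K := by
      filter_upwards [hgcev] with n hn
      rw [← hn]
      exact hgK n
    have hlim : tripleAct gc (x₀, x₀, x₀) ∈ K := hKcpt.isClosed.mem_of_tendsto htt hinK
    exact lt_irrefl _ ((hKsub hlim).1 : gc x₀ < gc x₀)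
  push_neg at hD
  -- dichotomy on klim
  by_cases hcase : ∃ z x' : ℝ, x₀ < z ∧ z < x' ∧ x' < x₀ + 1 ∧ klim z < klim x'
  · obtain ⟨z, x', hz1, hzx, hx2, hkzx⟩ := hcase
    have hz2 : z < x₀ + 1 := lt_trans hzx hx2
    have hx1 : x₀ < x' := lt_trans hz1 hzx
    have hS : (x' - 1, x₀, z) ∈ TripleSpace :=
      ⟨show x' - 1 < x₀ by linarith, show x₀ < z by linarith, show z < x' - 1 + 1 by linarith⟩
    have hP : (klim x' - 1, s, klim z) ∈ TripleSpace := by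
      have h1 := (hkb x' hx1 hx2).2
      have h2 := (hkb z hz1 hz2).1
      exact ⟨show klim x' - 1 < s by linarith, show s < klim z by linarith,
        show klim z < klim x' - 1 + 1 by linarith⟩
    have hI : Tendsto (fun n => tripleAct (g n) (x' - 1, x₀, z)) ↑𝒰
        (𝓝 (klim x' - 1, s, klim z)) := by
      have h1 : Tendsto (fun n => g n (x' - 1)) ↑𝒰 (𝓝 (klim x' - 1)) := by
        have heq : (fun n => g n (x' - 1)) = fun n => g n x' - 1 := by
          funext n
          have := hper _ (hgΓ n) (x' - 1)
          rw [sub_add_cancel] at this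
          linarith
        rw [heq]
        exact (hk x').sub_const 1
      exact h1.prodMk_nhds (hB.prodMk_nhds (hk z))
    exact template Γ hproper 𝒰 g hgΓ hD _ hS hP tendsto_const_nhds hI
  push_neg at hcase
  -- klim is constant on the interval
  have hconst : ∀ x : ℝ, x₀ < x → x < x₀ + 1 → klim x = klim a := by
    intro x hx1 hx2
    have hax1 : x₀ < a := by rw [hadef]; linarith
    have hax2 : a < x₀ + 1 := by rw [hadef]; linarith
    rcases lt_trichotomy x a with h | h | h
    · exact le_antisymm (hkmono x a h.le) (hcase x a hx1 h hax2)
    · rw [h]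
    · exact le_antisymm (hcase a x hax1 h hx2) (hkmono a x h.le)
  -- case (ii): klim is constant `v` on the interval
  set v : ℝ := klim a with hvdef
  have hax1 : x₀ < a := by rw [hadef]; linarith
  have hax2 : a < x₀ + 1 := by rw [hadef]; linarith
  have hpv : p ≤ v := (hkb a hax1 hax2).1
  have hvu : v ≤ u + 1 := (hkb a hax1 hax2).2
  have hsv : s < v := lt_of_lt_of_le hup2 hpv
  have hvs1 : v < s + 1 := lt_of_le_of_lt hvu (by linarith)
  -- conjugated elements W n = gₙ γ gₙ⁻¹
  set W : ℕ → Equiv.Perm ℝ := fun n => g n * γ * (g n)⁻¹ with hWdef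
  have hWΓ : ∀ n, W n ∈ Γ := fun n => mul_mem (mul_mem (hgΓ n) hγ) (inv_mem (hgΓ n))
  have hWapp : ∀ (n : ℕ) (x : ℝ), W n x = g n (γ ((g n)⁻¹ x)) := fun n x => rfl
  have hWinvapp : ∀ (n : ℕ) (x : ℝ), (W n)⁻¹ x = g n (γ⁻¹ ((g n)⁻¹ x)) := by
    intro n x
    have he : (W n)⁻¹ = g n * γ⁻¹ * (g n)⁻¹ := by
      rw [hWdef]; simp [mul_inv_rev, mul_assoc]
    rw [he]; rfl
  have hWper : ∀ (n : ℕ) (x : ℝ), W n (x + 1) = W n x + 1 := fun n => hper _ (hWΓ n)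
  -- the window bound
  have hWwin : ∀ (n : ℕ) (x : ℝ), W n x ∈ Icc (x - 1) (x + 1) := by
    intro n x
    set Bn := g n x₀ with hBn
    set j := ⌊x - Bn⌋ with hj
    have hj1 : Bn + (j : ℝ) ≤ x := by
      have := Int.floor_le (x - Bn); rw [← hj] at this; linarith
    have hj2 : x < Bn + (j : ℝ) + 1 := by
      have := Int.lt_floor_add_one (x - Bn); rw [← hj] at this; linarith
    have h1 : Bn + (j : ℝ) = g n (x₀ + (j : ℝ)) := by
      rw [hBn, ← per_int (hper _ (hgΓ n)) x₀ j]
    have hfixB : W n (Bn + (j : ℝ)) = Bn + (j : ℝ) := by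
      rw [hWapp, h1, Equiv.Perm.inv_apply_self]
      have h2 : γ (x₀ + (j : ℝ)) = x₀ + (j : ℝ) := by rw [per_int (hper γ hγ) x₀ j, hfix]
      rw [h2]
    have hfixB1 : W n (Bn + (j : ℝ) + 1) = Bn + (j : ℝ) + 1 := by rw [hWper, hfixB]
    have hmW := hmono _ (hWΓ n)
    rw [Set.mem_Icc]
    constructor
    · have := hmW.monotone hj1
      rw [hfixB] at this
      linarith
    · have := hmW hj2
      rw [hfixB1] at this
      linarith
  have hWex : ∀ x : ℝ, ∃ L, Tendsto (fun n => W n x) ↑𝒰 (𝓝 L) :=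
    fun x => hulim _ (x - 1) (x + 1) (fun n => hWwin n x)
  choose Wlim hW using hWex
  have hVwin : ∀ (n : ℕ) (x : ℝ), (W n)⁻¹ x ∈ Icc (x - 1) (x + 1) := by
    intro n x
    have h := hWwin n ((W n)⁻¹ x)
    rw [Set.mem_Icc, Equiv.Perm.apply_inv_self] at h
    rw [Set.mem_Icc]
    constructor <;> linarith [h.1, h.2]
  have hVex : ∀ x : ℝ, ∃ L, Tendsto (fun n => (W n)⁻¹ x) ↑𝒰 (𝓝 L) :=
    fun x => hulim _ (x - 1) (x + 1) (fun n => hVwin n x)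
  choose Vlim hV using hVex
  -- zone facts
  have hzone : ∀ y : ℝ, s < y → y < s + 1 →
      ∀ᶠ n in ↑𝒰, g n x₀ < y ∧ y < g n x₀ + 1 := by
    intro y h1 h2
    filter_upwards [hB.eventually_lt_const h1, (hB.add_const 1).eventually_const_lt h2]
      with n e1 e2
    exact ⟨e1, e2⟩
  have hzone' : ∀ (n : ℕ) (y : ℝ), g n x₀ < y → y < g n x₀ + 1 →
      x₀ < (g n)⁻¹ y ∧ (g n)⁻¹ y < x₀ + 1 := by
    intro n y h1 h2
    have hmg := hmono _ (hgΓ n)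
    constructor
    · have h3 : g n x₀ < g n ((g n)⁻¹ y) := by rwa [Equiv.Perm.apply_inv_self]
      exact hmg.lt_iff_lt.mp h3
    · have h3 : g n ((g n)⁻¹ y) < g n (x₀ + 1) := by
        rw [Equiv.Perm.apply_inv_self, hper _ (hgΓ n)]; exact h2
      exact hmg.lt_iff_lt.mp h3
  have hWgt : ∀ y : ℝ, s < y → y < s + 1 → ∀ᶠ n in ↑𝒰, y < W n y := by
    intro y h1 h2
    filter_upwards [hzone y h1 h2] with n hn
    obtain ⟨e1, e2⟩ := hzone' n y hn.1 hn.2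
    have h3 := (hmono _ (hgΓ n)) (hpos _ e1 e2)
    rw [Equiv.Perm.apply_inv_self] at h3
    rw [hWapp]
    exact h3
  have hWliml : ∀ y : ℝ, s < y → y < s + 1 → y ≤ Wlim y := fun y h1 h2 =>
    ge_of_tendsto (hW y) ((hWgt y h1 h2).mono fun n hn => hn.le)
  have hVlt : ∀ y : ℝ, s < y → y < s + 1 → ∀ᶠ n in ↑𝒰, (W n)⁻¹ y < y := by
    intro y h1 h2
    filter_upwards [hzone y h1 h2] with n hn
    obtain ⟨e1, e2⟩ := hzone' n y hn.1 hn.2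
    have h3 := (hmono _ (hgΓ n)) (hinvmem _ e1 e2).2.2
    rw [Equiv.Perm.apply_inv_self] at h3
    rw [hWinvapp]
    exact h3
  have hVliml : ∀ y : ℝ, s < y → y < s + 1 → Vlim y ≤ y := fun y h1 h2 =>
    le_of_tendsto (hV y) ((hVlt y h1 h2).mono fun n hn => hn.le)
  have hWle_v : ∀ y : ℝ, s < y → y < v → Wlim y ≤ v := by
    intro y h1 h2
    have hγa := hγmem a hax1 hax2
    have hkγa : klim (γ a) = v := hconst (γ a) hγa.1 hγa.2
    refine le_of_tendsto_of_tendsto (hW y) (by rw [← hkγa]; exact hk (γ a)) ?_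
    have hka : Tendsto (fun n => g n a) ↑𝒰 (𝓝 v) := hk a
    filter_upwards [hka.eventually_const_lt h2, hzone y h1 (by linarith)] with n hn1 hn2
    have hmg := hmono _ (hgΓ n)
    have hy : (g n)⁻¹ y < a := by
      have h3 : g n ((g n)⁻¹ y) < g n a := by rwa [Equiv.Perm.apply_inv_self]
      exact hmg.lt_iff_lt.mp h3
    have h4 := hmg.monotone (hγm hy).le
    rw [hWapp]
    exact h4
  have hWle_s1 : ∀ y : ℝ, s < y → y < s + 1 → Wlim y ≤ s + 1 := by
    intro y h1 h2
    refine le_of_tendsto_of_tendsto (hW y) (hB.add_const 1) ?_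
    filter_upwards [hzone y h1 h2] with n hn
    obtain ⟨e1, e2⟩ := hzone' n y hn.1 hn.2
    have h4 := (hmono _ (hgΓ n)) (hγmem _ e1 e2).2
    rw [hper _ (hgΓ n)] at h4
    rw [hWapp]
    exact h4.le
  have hVge_v : ∀ z : ℝ, v < z → z < s + 1 → v ≤ Vlim z := by
    intro z h1 h2
    by_contra hcon
    push_neg at hcon
    set y' := (max s (Vlim z) + v) / 2 with hy'def
    have hmax : max s (Vlim z) < v := max_lt hsv hcon
    have hy1 : s < y' := by
      have := le_max_left s (Vlim z)
      rw [hy'def]; linarith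
    have hy2 : y' < v := by rw [hy'def]; linarith
    have hy3 : Vlim z < y' := by
      have := le_max_right s (Vlim z)
      rw [hy'def]; linarith
    have hWy' : Wlim y' ≤ v := hWle_v y' hy1 hy2
    have hev : ∀ᶠ n in ↑𝒰, W n y' < z := (hW y').eventually_lt_const (lt_of_le_of_lt hWy' h1)
    have hle2 : y' ≤ Vlim z := by
      refine ge_of_tendsto (hV z) ?_
      filter_upwards [hev] with n hn
      have hmW := hmono _ (hWΓ n)
      have h3 : W n y' < W n ((W n)⁻¹ z) := by rwa [Equiv.Perm.apply_inv_self]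
      exact (hmW.lt_iff_lt.mp h3).le
    linarith
  -- dichotomy on W
  by_cases hWc : ∃ w : Equiv.Perm ℝ, {n | W n = w} ∈ 𝒰
  · obtain ⟨Wc, hWcU⟩ := hWc
    have hWcev : ∀ᶠ n in ↑𝒰, W n = Wc := Ultrafilter.mem_coe.mpr hWcU
    obtain ⟨n₀, hn₀⟩ := Filter.nonempty_of_mem (Ultrafilter.mem_coe.mpr hWcU)
    have hWcΓ : Wc ∈ Γ := by rw [← hn₀]; exact hWΓ n₀
    have hWcl : ∀ y : ℝ, Wlim y = Wc y := by
      intro y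
      refine tendsto_nhds_unique (hW y) ?_
      refine Tendsto.congr' ?_ tendsto_const_nhds
      filter_upwards [hWcev] with n hn
      rw [hn]
    have hWcIoo : ∀ y : ℝ, s < y → y < s + 1 → y ≤ Wc y ∧ Wc y ≤ s + 1 := fun y h1 h2 =>
      ⟨by rw [← hWcl]; exact hWliml y h1 h2, by rw [← hWcl]; exact hWle_s1 y h1 h2⟩
    have hWcv : ∀ y : ℝ, s < y → y < v → Wc y ≤ v := fun y h1 h2 => by
      rw [← hWcl]; exact hWle_v y h1 h2
    have hWcont := hcont Wc hWcΓ
    have hWcper := hper Wc hWcΓ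
    have hWcs : Wc s = s := by
      have hmemIoo : Ioo (v - 1) s ∈ 𝓝[<] s := Ioo_mem_nhdsLT_of_mem ⟨by linarith, le_rfl⟩
      have ht : Tendsto Wc (𝓝[<] s) (𝓝 (Wc s)) := (hWcont.tendsto s).mono_left nhdsWithin_le_nhds
      have hid : Tendsto (fun y : ℝ => y) (𝓝[<] s) (𝓝 s) := tendsto_id.mono_left nhdsWithin_le_nhds
      have hub : Wc s ≤ s := by
        refine le_of_tendsto ht ?_
        filter_upwards [hmemIoo] with y hy
        have h2 : y + 1 < s + 1 := by linarith [hy.2]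
        have h1 : s < y + 1 := by linarith [hy.1, hsv]
        have := (hWcIoo (y + 1) h1 h2).2
        rw [hWcper] at this
        linarith
      have hlb : s ≤ Wc s := by
        refine le_of_tendsto_of_tendsto hid ht ?_
        filter_upwards [hmemIoo] with y hy
        have h2 : y + 1 < s + 1 := by linarith [hy.2]
        have h1 : s < y + 1 := by linarith [hy.1, hsv]
        have := (hWcIoo (y + 1) h1 h2).1
        rw [hWcper] at this
        linarith
      linarith
    have hWcvfix : Wc v = v := by
      have hmemIoo : Ioo s v ∈ 𝓝[<] v := Ioo_mem_nhdsLT_of_mem ⟨hsv, le_rfl⟩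
      have ht : Tendsto Wc (𝓝[<] v) (𝓝 (Wc v)) := (hWcont.tendsto v).mono_left nhdsWithin_le_nhds
      have hid : Tendsto (fun y : ℝ => y) (𝓝[<] v) (𝓝 v) := tendsto_id.mono_left nhdsWithin_le_nhds
      have hub : Wc v ≤ v := by
        refine le_of_tendsto ht ?_
        filter_upwards [hmemIoo] with y hy
        exact hWcv y hy.1 hy.2
      have hlb : v ≤ Wc v := by
        refine le_of_tendsto_of_tendsto hid ht ?_
        filter_upwards [hmemIoo] with y hy
        exact (hWcIoo y hy.1 (by linarith [hy.2])).1
      linarith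
    have hkey : ∀ t : ℝ, Wc t = t → ∃ k : ℤ, t = g n₀ x₀ + k := by
      intro t ht
      have hWt : g n₀ (γ ((g n₀)⁻¹ t)) = t := by
        rw [← hWapp, hn₀, ht]
      have hfixw : γ ((g n₀)⁻¹ t) = (g n₀)⁻¹ t := by
        apply (g n₀).injective
        rw [Equiv.Perm.apply_inv_self]
        exact hWt
      obtain ⟨k, hkk⟩ := hfixZ _ hfixw
      refine ⟨k, ?_⟩
      have h5 : (g n₀) ((g n₀)⁻¹ t) = g n₀ (x₀ + (k : ℝ)) := by rw [← hkk]
      rw [Equiv.Perm.apply_inv_self, per_int (hper _ (hgΓ n₀)) x₀ k] at h5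
      exact h5
    obtain ⟨k₁, hk₁⟩ := hkey s hWcs
    obtain ⟨k₂, hk₂⟩ := hkey v hWcvfix
    have hz1 : (0 : ℤ) < k₂ - k₁ := by
      have : (0 : ℝ) < ((k₂ - k₁ : ℤ) : ℝ) := by push_cast; linarith
      exact_mod_cast this
    have hz2 : (k₂ - k₁ : ℤ) < 1 := by
      have : ((k₂ - k₁ : ℤ) : ℝ) < 1 := by push_cast; linarith
      exact_mod_cast this
    omega
  push_neg at hWc
  have hWinvinj : ∀ w : Equiv.Perm ℝ, {n | (W n)⁻¹ = w} ∉ 𝒰 := by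
    intro w
    have he : {n | (W n)⁻¹ = w} = {n | W n = w⁻¹} := by
      ext n; simp [inv_eq_iff_eq_inv]
    rw [he]
    exact hWc w⁻¹
  -- trichotomy for Wlim on (s, v)
  by_cases hAc : ∃ y' y : ℝ, s < y' ∧ y' < y ∧ y < v ∧ Wlim y' < Wlim y
  · obtain ⟨y', y, h1, h2, h3, h4⟩ := hAc
    set M := min (s + 1) (y' + 1) with hMdef
    have hM1 : v < M := lt_min hvs1 (by linarith)
    have hM2 : M ≤ s + 1 := min_le_left _ _
    have hM3 : M ≤ y' + 1 := min_le_right _ _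
    set zA := (v + M) / 2 with hzAdef
    have hzA1 : v < zA := by rw [hzAdef]; linarith
    have hzA2 : zA < s + 1 := by rw [hzAdef]; linarith
    have hzA3 : zA < y' + 1 := by rw [hzAdef]; linarith
    have hzAs : s < zA := lt_trans hsv hzA1
    have hS : (y', y, zA) ∈ TripleSpace :=
      ⟨h2, lt_trans h3 hzA1, hzA3⟩
    have hP : (Wlim y', Wlim y, Wlim zA) ∈ TripleSpace := by
      have e1 : Wlim y ≤ v := hWle_v y (lt_trans h1 h2) h3
      have e2 : zA ≤ Wlim zA := hWliml zA hzAs hzA2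
      have e3 : Wlim zA ≤ s + 1 := hWle_s1 zA hzAs hzA2
      have e4 : y' ≤ Wlim y' := hWliml y' h1 (by linarith)
      exact ⟨h4, show Wlim y < Wlim zA by linarith, show Wlim zA < Wlim y' + 1 by linarith⟩
    have hI : Tendsto (fun n => tripleAct (W n) (y', y, zA)) ↑𝒰
        (𝓝 (Wlim y', Wlim y, Wlim zA)) :=
      (hW y').prodMk_nhds ((hW y).prodMk_nhds (hW zA))
    exact template Γ hproper 𝒰 W hWΓ hWc (fun _ => (y', y, zA)) hS hP tendsto_const_nhds hI
  push_neg at hAc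
  have hWcv : ∀ y : ℝ, s < y → y < v → Wlim y = v := by
    intro y hy1 hy2
    refine le_antisymm (hWle_v y hy1 hy2) ?_
    by_contra hcon
    push_neg at hcon
    set y'' := (max y (Wlim y) + v) / 2 with hy''def
    have hmax : max y (Wlim y) < v := max_lt hy2 hcon
    have e1 : y < y'' := by
      have := le_max_left y (Wlim y); rw [hy''def]; linarith
    have e2 : y'' < v := by rw [hy''def]; linarith
    have e3 : Wlim y < y'' := by
      have := le_max_right y (Wlim y); rw [hy''def]; linarith
    have h5 := hAc y y'' hy1 e1 e2
    have h6 := hWliml y'' (lt_trans hy1 e1) (by linarith)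
    linarith
  set y₀ := (s + v) / 2 with hy₀def
  have hy₀1 : s < y₀ := by rw [hy₀def]; linarith
  have hy₀2 : y₀ < v := by rw [hy₀def]; linarith
  by_cases hBc : ∃ z' z : ℝ, v < z' ∧ z' < z ∧ z < s + 1 ∧ Wlim z' < Wlim z
  · obtain ⟨z', z, h1, h2, h3, h4⟩ := hBc
    have hS : (y₀, z', z) ∈ TripleSpace :=
      ⟨lt_trans hy₀2 h1, h2, show z < y₀ + 1 by rw [hy₀def]; linarith⟩
    have hP : (v, Wlim z', Wlim z) ∈ TripleSpace := by
      have e1 : z' ≤ Wlim z' := hWliml z' (lt_trans hsv h1) (by linarith)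
      have e2 : Wlim z ≤ s + 1 := hWle_s1 z (by linarith) h3
      exact ⟨show v < Wlim z' by linarith, h4, show Wlim z < v + 1 by linarith⟩
    have hWy₀ : Tendsto (fun n => W n y₀) ↑𝒰 (𝓝 v) := by
      have := hW y₀; rwa [hWcv y₀ hy₀1 hy₀2] at this
    have hI : Tendsto (fun n => tripleAct (W n) (y₀, z', z)) ↑𝒰
        (𝓝 (v, Wlim z', Wlim z)) :=
      hWy₀.prodMk_nhds ((hW z').prodMk_nhds (hW z))
    exact template Γ hproper 𝒰 W hWΓ hWc (fun _ => (y₀, z', z)) hS hP tendsto_const_nhds hI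
  push_neg at hBc
  have hWcs1 : ∀ z : ℝ, v < z → z < s + 1 → Wlim z = s + 1 := by
    intro z hz1 hz2
    refine le_antisymm (hWle_s1 z (lt_trans hsv hz1) hz2) ?_
    by_contra hcon
    push_neg at hcon
    set z'' := (max z (Wlim z) + (s + 1)) / 2 with hz''def
    have hmax : max z (Wlim z) < s + 1 := max_lt hz2 hcon
    have e1 : z < z'' := by
      have := le_max_left z (Wlim z); rw [hz''def]; linarith
    have e2 : z'' < s + 1 := by rw [hz''def]; linarith
    have e3 : Wlim z < z'' := by
      have := le_max_right z (Wlim z); rw [hz''def]; linarith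
    have h5 := hBc z z'' hz1 e1 e2
    have h6 := hWliml z'' (by linarith) e2
    linarith
  have hWshift : ∀ x : ℝ, Wlim (x + 1) = Wlim x + 1 := by
    intro x
    have h2 : Tendsto (fun n => W n (x + 1)) ↑𝒰 (𝓝 (Wlim x + 1)) := by
      have heq : (fun n => W n (x + 1)) = fun n => W n x + 1 := by
        funext n; rw [hWper]
      rw [heq]
      exact (hW x).add_const 1
    exact tendsto_nhds_unique (hW (x + 1)) h2
  have hWlow : ∀ x : ℝ, v - 1 < x → x < s → Wlim x = s := by
    intro x e1 e2
    have h1 : Wlim (x + 1) = s + 1 := hWcs1 (x + 1) (by linarith) (by linarith)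
    have h2 := hWshift x
    linarith
  have hVge_s : ∀ y : ℝ, s < y → y < v → s ≤ Vlim y := by
    intro y hy1 hy2
    by_contra hcon
    push_neg at hcon
    set x := (max (v - 1) (Vlim y) + s) / 2 with hxdef
    have hmax : max (v - 1) (Vlim y) < s := max_lt (by linarith) hcon
    have e1 : v - 1 < x := by
      have := le_max_left (v - 1) (Vlim y); rw [hxdef]; linarith
    have e2 : x < s := by rw [hxdef]; linarith
    have e3 : Vlim y < x := by
      have := le_max_right (v - 1) (Vlim y); rw [hxdef]; linarith
    have hWx : Wlim x = s := hWlow x e1 e2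
    have hev : ∀ᶠ n in ↑𝒰, W n x < y := by
      have h7 := hW x; rw [hWx] at h7
      exact h7.eventually_lt_const hy1
    have hle2 : x ≤ Vlim y := by
      refine ge_of_tendsto (hV y) ?_
      filter_upwards [hev] with n hn
      have hmW := hmono _ (hWΓ n)
      have h3 : W n x < W n ((W n)⁻¹ y) := by rwa [Equiv.Perm.apply_inv_self]
      exact (hmW.lt_iff_lt.mp h3).le
    linarith
  by_cases hA'c : ∃ y' y : ℝ, s < y' ∧ y' < y ∧ y < v ∧ Vlim y' < Vlim y
  · obtain ⟨y', y, h1, h2, h3, h4⟩ := hA'c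
    set M := min (s + 1) (y' + 1) with hMdef
    have hM1 : v < M := lt_min hvs1 (by linarith)
    have hM2 : M ≤ s + 1 := min_le_left _ _
    have hM3 : M ≤ y' + 1 := min_le_right _ _
    set zA := (v + M) / 2 with hzAdef
    have hzA1 : v < zA := by rw [hzAdef]; linarith
    have hzA2 : zA < s + 1 := by rw [hzAdef]; linarith
    have hzA3 : zA < y' + 1 := by rw [hzAdef]; linarith
    have hS : (y', y, zA) ∈ TripleSpace :=
      ⟨h2, lt_trans h3 hzA1, hzA3⟩
    have hP : (Vlim y', Vlim y, Vlim zA) ∈ TripleSpace := by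
      have e1 : Vlim y ≤ y := hVliml y (lt_trans h1 h2) (by linarith)
      have e2 : v ≤ Vlim zA := hVge_v zA hzA1 hzA2
      have e3 : Vlim zA ≤ zA := hVliml zA (lt_trans hsv hzA1) hzA2
      have e4 : s ≤ Vlim y' := hVge_s y' h1 (lt_trans h2 h3)
      exact ⟨h4, show Vlim y < Vlim zA by linarith, show Vlim zA < Vlim y' + 1 by linarith⟩
    have hI : Tendsto (fun n => tripleAct (W n)⁻¹ (y', y, zA)) ↑𝒰
        (𝓝 (Vlim y', Vlim y, Vlim zA)) :=
      (hV y').prodMk_nhds ((hV y).prodMk_nhds (hV zA))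
    exact template Γ hproper 𝒰 (fun n => (W n)⁻¹) (fun n => inv_mem (hWΓ n)) hWinvinj
      (fun _ => (y', y, zA)) hS hP tendsto_const_nhds hI
  push_neg at hA'c
  have hVcs : ∀ y : ℝ, s < y → y < v → Vlim y = s := by
    intro y hy1 hy2
    refine le_antisymm ?_ (hVge_s y hy1 hy2)
    by_contra hcon
    push_neg at hcon
    set y'' := (s + min y (Vlim y)) / 2 with hy''def
    have hmin : s < min y (Vlim y) := lt_min hy1 hcon
    have e1 : s < y'' := by rw [hy''def]; linarith
    have e2 : y'' < y := by
      have := min_le_left y (Vlim y); rw [hy''def]; linarith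
    have e3 : y'' < Vlim y := by
      have := min_le_right y (Vlim y); rw [hy''def]; linarith
    have h5 := hA'c y'' y e1 e2 hy2
    have h6 := hVliml y'' e1 (by linarith)
    linarith
  by_cases hB'c : ∃ z' z : ℝ, v < z' ∧ z' < z ∧ z < s + 1 ∧ Vlim z' < Vlim z
  · obtain ⟨z', z, h1, h2, h3, h4⟩ := hB'c
    have hS : (y₀, z', z) ∈ TripleSpace :=
      ⟨lt_trans hy₀2 h1, h2, show z < y₀ + 1 by rw [hy₀def]; linarith⟩
    have hP : (s, Vlim z', Vlim z) ∈ TripleSpace := by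
      have e1 : v ≤ Vlim z' := hVge_v z' h1 (by linarith)
      have e2 : Vlim z ≤ z := hVliml z (by linarith) h3
      exact ⟨show s < Vlim z' by linarith, h4, show Vlim z < s + 1 by linarith⟩
    have hVy₀ : Tendsto (fun n => (W n)⁻¹ y₀) ↑𝒰 (𝓝 s) := by
      have := hV y₀; rwa [hVcs y₀ hy₀1 hy₀2] at this
    have hI : Tendsto (fun n => tripleAct (W n)⁻¹ (y₀, z', z)) ↑𝒰
        (𝓝 (s, Vlim z', Vlim z)) :=
      hVy₀.prodMk_nhds ((hV z').prodMk_nhds (hV z))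
    exact template Γ hproper 𝒰 (fun n => (W n)⁻¹) (fun n => inv_mem (hWΓ n)) hWinvinj
      (fun _ => (y₀, z', z)) hS hP tendsto_const_nhds hI
  push_neg at hB'c
  have hVcv : ∀ z : ℝ, v < z → z < s + 1 → Vlim z = v := by
    intro z hz1 hz2
    refine le_antisymm ?_ (hVge_v z hz1 hz2)
    by_contra hcon
    push_neg at hcon
    set z'' := (v + min z (Vlim z)) / 2 with hz''def
    have hmin : v < min z (Vlim z) := lt_min hz1 hcon
    have e1 : v < z'' := by rw [hz''def]; linarith
    have e2 : z'' < z := by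
      have := min_le_left z (Vlim z); rw [hz''def]; linarith
    have e3 : z'' < Vlim z := by
      have := min_le_right z (Vlim z); rw [hz''def]; linarith
    have h5 := hB'c z'' z e1 e2 hz2
    have h6 := hVliml z'' (by linarith) (by linarith)
    linarith
  -- the final contradiction
  set z₀ := (v + (s + 1)) / 2 with hz₀def
  have hz₀1 : v < z₀ := by rw [hz₀def]; linarith
  have hz₀2 : z₀ < s + 1 := by rw [hz₀def]; linarith
  have hS : (y₀, v, z₀) ∈ TripleSpace :=
    ⟨hy₀2, hz₀1, show z₀ < y₀ + 1 by rw [hz₀def, hy₀def]; linarith⟩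
  have hP : (v, z₀, s + 1) ∈ TripleSpace :=
    ⟨hz₀1, hz₀2, show s + 1 < v + 1 by linarith⟩
  have hT : Tendsto (fun n => (y₀, (W n)⁻¹ z₀, z₀)) ↑𝒰 (𝓝 (y₀, v, z₀)) := by
    have h1 : Tendsto (fun n => (W n)⁻¹ z₀) ↑𝒰 (𝓝 v) := by
      have := hV z₀; rwa [hVcv z₀ hz₀1 hz₀2] at this
    exact tendsto_const_nhds.prodMk_nhds (h1.prodMk_nhds tendsto_const_nhds)
  have hI : Tendsto (fun n => tripleAct (W n) (y₀, (W n)⁻¹ z₀, z₀)) ↑𝒰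
      (𝓝 (v, z₀, s + 1)) := by
    have h1 : Tendsto (fun n => W n y₀) ↑𝒰 (𝓝 v) := by
      have := hW y₀; rwa [hWcv y₀ hy₀1 hy₀2] at this
    have h3 : Tendsto (fun n => W n z₀) ↑𝒰 (𝓝 (s + 1)) := by
      have := hW z₀; rwa [hWcs1 z₀ hz₀1 hz₀2] at this
    have heq : (fun n => tripleAct (W n) (y₀, (W n)⁻¹ z₀, z₀)) =
        fun n => (W n y₀, z₀, W n z₀) := by
      funext n
      show (W n y₀, W n ((W n)⁻¹ z₀), W n z₀) = _
      rw [Equiv.Perm.apply_inv_self]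
    rw [heq]
    exact h1.prodMk_nhds (tendsto_const_nhds.prodMk_nhds h3)
  exact template Γ hproper 𝒰 W hWΓ hWc (fun n => (y₀, (W n)⁻¹ z₀, z₀)) hS hP hT hI


lemma exists_interior_fix (Γ : Subgroup (Equiv.Perm ℝ))
    (hmono : ∀ γ ∈ Γ, StrictMono ⇑γ) (hcont : ∀ γ ∈ Γ, Continuous ⇑γ)
    (hper : ∀ γ ∈ Γ, ∀ x : ℝ, γ (x + 1) = γ x + 1)
    (hproper : ∀ K : Set (ℝ × ℝ × ℝ), K ⊆ TripleSpace → IsCompact K →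
      {γ : Equiv.Perm ℝ | γ ∈ Γ ∧ (tripleAct γ '' K ∩ K).Nonempty}.Finite)
    (hcocompact : ∃ K : Set (ℝ × ℝ × ℝ), K ⊆ TripleSpace ∧ IsCompact K ∧
      (⋃ γ ∈ Γ, tripleAct γ '' K) = TripleSpace)
    {γ : Equiv.Perm ℝ} (hγ : γ ∈ Γ) {x₀ : ℝ} (hfix : γ x₀ = x₀) :
    ∃ y : ℝ, x₀ < y ∧ y < x₀ + 1 ∧ γ y = y := by
  by_contra hno
  push_neg at hno
  have h : ∀ y : ℝ, x₀ < y → y < x₀ + 1 → γ y ≠ y := fun y h1 h2 => hno y h1 h2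
  have hnozero : ∀ y₁ y₂ : ℝ, x₀ < y₁ → y₁ < x₀ + 1 → x₀ < y₂ → y₂ < x₀ + 1 →
      y₁ < γ y₁ → γ y₂ < y₂ → False := by
    intro y₁ y₂ h11 h12 h21 h22 hp hn
    have hcont' : Continuous (fun x : ℝ => γ x - x) := (hcont γ hγ).sub continuous_id
    rcases le_total y₁ y₂ with hle | hle
    · have hsub := intermediate_value_Icc' hle hcont'.continuousOn
      have h0 : (0 : ℝ) ∈ Icc ((fun x : ℝ => γ x - x) y₂) ((fun x : ℝ => γ x - x) y₁) := by
        constructor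
        · show γ y₂ - y₂ ≤ 0; linarith
        · show 0 ≤ γ y₁ - y₁; linarith
      obtain ⟨w, hw, hw0⟩ := hsub h0
      have hwf : γ w = w := by
        have : γ w - w = 0 := hw0
        linarith
      exact h w (lt_of_lt_of_le h11 hw.1) (lt_of_le_of_lt hw.2 h22) hwf
    · have hsub := intermediate_value_Icc hle hcont'.continuousOn
      have h0 : (0 : ℝ) ∈ Icc ((fun x : ℝ => γ x - x) y₂) ((fun x : ℝ => γ x - x) y₁) := by
        constructor
        · show γ y₂ - y₂ ≤ 0; linarith
        · show 0 ≤ γ y₁ - y₁; linarith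
      obtain ⟨w, hw, hw0⟩ := hsub h0
      have hwf : γ w = w := by
        have : γ w - w = 0 := hw0
        linarith
      exact h w (lt_of_lt_of_le h21 hw.1) (lt_of_le_of_lt hw.2 h12) hwf
  set c : ℝ := x₀ + 1/2 with hcdef
  have hc1 : x₀ < c := by rw [hcdef]; linarith
  have hc2 : c < x₀ + 1 := by rw [hcdef]; linarith
  rcases lt_trichotomy (γ c) c with hlt | heq | hgt
  · -- γ < id everywhere on the interval; use γ⁻¹
    have hs : ∀ y : ℝ, x₀ < y → y < x₀ + 1 → γ y < y := by
      intro y h1 h2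
      rcases lt_trichotomy (γ y) y with h' | h' | h'
      · exact h'
      · exact absurd h' (h y h1 h2)
      · exact absurd (hnozero y c h1 h2 hc1 hc2 h' hlt) (fun f => f)
    have hγi : γ⁻¹ ∈ Γ := inv_mem hγ
    have hifix : γ⁻¹ x₀ = x₀ := by
      conv_lhs => rw [← hfix]
      exact Equiv.Perm.inv_apply_self γ x₀
    have hfix1 : γ (x₀ + 1) = x₀ + 1 := by rw [hper γ hγ, hfix]
    have hifix1 : γ⁻¹ (x₀ + 1) = x₀ + 1 := by
      conv_lhs => rw [← hfix1]
      exact Equiv.Perm.inv_apply_self γ (x₀ + 1)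
    have hipos : ∀ y : ℝ, x₀ < y → y < x₀ + 1 → y < γ⁻¹ y := by
      intro y h1 h2
      have e1 : x₀ < γ⁻¹ y := by rw [← hifix]; exact (hmono _ hγi) h1
      have e2 : γ⁻¹ y < x₀ + 1 := by rw [← hifix1]; exact (hmono _ hγi) h2
      have := hs (γ⁻¹ y) e1 e2
      rwa [Equiv.Perm.apply_inv_self] at this
    exact no_parabolic Γ hmono hcont hper hproper hcocompact hγi hifix hipos
  · exact h c hc1 hc2 heq
  · have hs : ∀ y : ℝ, x₀ < y → y < x₀ + 1 → y < γ y := by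
      intro y h1 h2
      rcases lt_trichotomy (γ y) y with h' | h' | h'
      · exact absurd (hnozero c y hc1 hc2 h1 h2 hgt h') (fun f => f)
      · exact absurd h' (h y h1 h2)
      · exact h'
    exact no_parabolic Γ hmono hcont hper hproper hcocompact hγ hfix hs

end NoParab

theorem cocompact_extended_convergence_group_no_parabolics
    (Γ : Subgroup (Equiv.Perm ℝ))
    (hmono : ∀ γ ∈ Γ, StrictMono ⇑γ) (hcont : ∀ γ ∈ Γ, Continuous ⇑γ)
    (hper : ∀ γ ∈ Γ, ∀ x : ℝ, γ (x + 1) = γ x + 1)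
    (hproper : ∀ K : Set (ℝ × ℝ × ℝ), K ⊆ TripleSpace → IsCompact K →
      {γ : Equiv.Perm ℝ | γ ∈ Γ ∧ (tripleAct γ '' K ∩ K).Nonempty}.Finite)
    (hcocompact : ∃ K : Set (ℝ × ℝ × ℝ), K ⊆ TripleSpace ∧ IsCompact K ∧
      (⋃ γ ∈ Γ, tripleAct γ '' K) = TripleSpace) :
    ∀ γ ∈ Γ, γ ≠ 1 → (∃ x : ℝ, γ x = x) →
      (∃ x₀ y : ℝ, x₀ < y ∧ y < x₀ + 1 ∧ γ x₀ = x₀ ∧ γ y = y) ∧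
      Set.encard ((fun x : ℝ => (x : AddCircle (1 : ℝ))) '' {x : ℝ | γ x = x}) = 2 := by
  intro γ hγ hne hex
  obtain ⟨x₀, hx₀⟩ := hex
  obtain ⟨y, hy1, hy2, hyfix⟩ :=
    NoParab.exists_interior_fix Γ hmono hcont hper hproper hcocompact hγ hx₀
  refine ⟨⟨x₀, y, hy1, hy2, hx₀, hyfix⟩, ?_⟩
  have hxyne : ((x₀ : AddCircle (1 : ℝ))) ≠ (y : AddCircle (1 : ℝ)) := by
    intro he
    rw [QuotientAddGroup.eq_iff_sub_mem] at he
    obtain ⟨k, hk⟩ := AddSubgroup.mem_zmultiples_iff.mp he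
    rw [zsmul_eq_mul, mul_one] at hk
    have h1 : ((k : ℤ) : ℝ) < 0 := by rw [hk]; linarith
    have h2 : (-1 : ℝ) < ((k : ℤ) : ℝ) := by rw [hk]; linarith
    have h3 : (k : ℤ) < 0 := by exact_mod_cast h1
    have h4 : (-1 : ℤ) < k := by exact_mod_cast h2
    omega
  have hset : ((fun x : ℝ => (x : AddCircle (1 : ℝ))) '' {x : ℝ | γ x = x}) =
      {(x₀ : AddCircle (1 : ℝ)), (y : AddCircle (1 : ℝ))} := by
    apply Set.Subset.antisymm
    · rintro c ⟨z, hz, rfl⟩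
      have hzf : γ z = z := hz
      by_contra hc
      simp only [Set.mem_insert_iff, Set.mem_singleton_iff] at hc
      push_neg at hc
      set z' := z - ((⌊z - x₀⌋ : ℤ) : ℝ) with hz'def
      have hz'fix : γ z' = z' := by
        have hpi := NoParab.per_int (hper γ hγ) z (-⌊z - x₀⌋)
        rw [hzf] at hpi
        have he : z + ((-⌊z - x₀⌋ : ℤ) : ℝ) = z' := by rw [hz'def]; push_cast; ring
        rwa [he] at hpi
      have hcirc : (z' : AddCircle (1 : ℝ)) = (z : AddCircle (1 : ℝ)) := by
        rw [QuotientAddGroup.eq_iff_sub_mem]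
        refine AddSubgroup.mem_zmultiples_iff.mpr ⟨-⌊z - x₀⌋, ?_⟩
        rw [zsmul_eq_mul, mul_one, hz'def]
        push_cast
        ring
      have hb1 : x₀ ≤ z' := by
        have := Int.floor_le (z - x₀)
        rw [hz'def]
        linarith
      have hb2 : z' < x₀ + 1 := by
        have := Int.lt_floor_add_one (z - x₀)
        rw [hz'def]
        linarith
      have hz'ne : z' ≠ x₀ := by
        intro he
        exact hc.1 (by rw [← hcirc, he])
      have hz'gt : x₀ < z' := lt_of_le_of_ne hb1 (Ne.symm hz'ne)
      have hz'ney : z' ≠ y := by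
        intro he
        exact hc.2 (by rw [← hcirc, he])
      have hγ1 : γ = 1 := by
        rcases lt_or_gt_of_ne hz'ney with hlt | hgt
        · exact NoParab.fix_three Γ hmono hproper hγ hz'gt hlt hy2 hx₀ hz'fix hyfix
        · exact NoParab.fix_three Γ hmono hproper hγ hy1 hgt hb2 hx₀ hyfix hz'fix
      exact hne hγ1
    · rintro c hc
      simp only [Set.mem_insert_iff, Set.mem_singleton_iff] at hc
      rcases hc with rfl | rfl
      · exact ⟨x₀, hx₀, rfl⟩
      · exact ⟨y, hyfix, rfl⟩
  rw [hset]
  exact Set.encard_pair hxyne
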